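/- There exists an uncountable family (of cardinality 2^ℵ₀) of permutations of ℕ such that any two distinct members are infinitely colliding, i.e., for any two distinct permutations σ, τ in the family there are infinitely many positions j with |σ(j) - τ(j)| = 1. -/
import Mathlib

private def gfun (z : ℕ → Bool) (j : ℕ) : ℕ :=
  if z (Nat.unpair (j / 2)).1 then (if j % 2 = 0 then j + 1 else j - 1) else j

private lemma gfun_invol (z : ℕ → Bool) : Function.Involutive (gfun z) := by
  intro j
  by_cases h : z (Nat.unpair (j / 2)).1
  · rcases Nat.even_or_odd j with he | ho
    · obtain ⟨q, hq⟩ := he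
      have h0 : j % 2 = 0 := by omega
      have h1 : gfun z j = j + 1 := by unfold gfun; rw [if_pos h, if_pos h0]
      rw [h1]
      have hdiv : (j + 1) / 2 = j / 2 := by omega
      have h2 : (j + 1) % 2 = 1 := by omega
      unfold gfun
      rw [hdiv, if_pos h, if_neg (by omega : ¬ (j+1) % 2 = 0)]
      omega
    · obtain ⟨q, hq⟩ := ho
      have h0 : ¬ j % 2 = 0 := by omega
      have h1 : gfun z j = j - 1 := by unfold gfun; rw [if_pos h, if_neg h0]
      rw [h1]
      have hdiv : (j - 1) / 2 = j / 2 := by omega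
      unfold gfun
      rw [hdiv, if_pos h, if_pos (by omega : (j-1) % 2 = 0)]
      omega
  · unfold gfun; rw [if_neg h, if_neg h]

/-- There is an uncountable family (indexed by {0,1}^ℕ) of permutations of ℕ,
any two distinct members of which are infinitely colliding. -/
theorem uncountably_many_infinitely_colliding :
    ∃ F : (ℕ → Bool) → Equiv.Perm ℕ, Function.Injective F ∧
      ∀ z z' : ℕ → Bool, z ≠ z' →
        {j : ℕ | ((F z j : ℤ) - (F z' j : ℤ)).natAbs = 1}.Infinite := by
  refine ⟨fun z => (gfun_invol z).toPerm, ?_, ?_⟩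
  · -- injectivity, proved via the collision property below
    intro z z' hzz'
    by_contra hne
    -- find n where they differ and exhibit a point where values differ
    have : ∃ n, z n ≠ z' n := by
      by_contra h
      push_neg at h
      exact hne (funext h)
    obtain ⟨n, hn⟩ := this
    have := congrFun (congrArg (fun e => (e : Equiv.Perm ℕ) ∘ id) hzz') (2 * Nat.pair n 0)
    simp only [Function.comp, id] at this
    have hval : gfun z (2 * Nat.pair n 0) = gfun z' (2 * Nat.pair n 0) := this
    unfold gfun at hval
    have hd : (2 * Nat.pair n 0) / 2 = Nat.pair n 0 := by omega
    have hm : (2 * Nat.pair n 0) % 2 = 0 := by omega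
    rw [hd, hm, Nat.unpair_pair] at hval
    simp only at hval
    cases hz : z n <;> cases hz' : z' n <;> simp [hz, hz'] at hval hn <;> omega
  · intro z z' hzz'
    have : ∃ n, z n ≠ z' n := by
      by_contra h
      push_neg at h
      exact hzz' (funext h)
    obtain ⟨n, hn⟩ := this
    apply Set.infinite_of_injective_forall_mem
      (f := fun k : ℕ => 2 * Nat.pair n k)
    · intro a b hab
      simp only at hab
      have : Nat.pair n a = Nat.pair n b := by omega
      simpa using congrArg (fun m => (Nat.unpair m).2) this
    · intro k
      simp only [Set.mem_setOf_eq, Function.Involutive.coe_toPerm]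
      set j := 2 * Nat.pair n k with hj
      have hd : j / 2 = Nat.pair n k := by omega
      have hm : j % 2 = 0 := by omega
      unfold gfun
      rw [hd, hm, Nat.unpair_pair]
      simp only
      cases hz : z n <;> cases hz' : z' n <;> simp [hz, hz'] at hn ⊢ <;> omega
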